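/- For an object S of C, relative S-factorizations X →^π X̄ →^{π'} △X correspond to mixed objects over the visible base m(S): from a relative S-factorization one obtains the mixed m(S)-object (X̄, X, p₁∘π', π), where p₁ : △X → X is the canonical projection, and conversely every mixed m(S)-object arises uniquely this way. -/

import Mathlib

open CategoryTheory CategoryTheory.Limits

universe v u

variable {C : Type u} [Category.{v} C]

/-- The twisted category `tC` attached to a category `C` with an endomorphism `F` of the
identity functor: objects are pairs `(X, Φ)` with `Φ ≫ Φ = F.app X`. -/
structure Twisted (C : Type u) [Category.{v} C] (F : 𝟭 C ⟶ 𝟭 C) where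
  X : C
  tw : X ⟶ X
  tw_tw : tw ≫ tw = F.app X

namespace Twisted

variable {F : 𝟭 C ⟶ 𝟭 C}

instance : Category (Twisted C F) where
  Hom A B := { f : A.X ⟶ B.X // A.tw ≫ f = f ≫ B.tw }
  id A := ⟨𝟙 A.X, by simp⟩
  comp {A B D} f g := ⟨f.1 ≫ g.1, by
    rw [← Category.assoc, f.2, Category.assoc, g.2, ← Category.assoc]⟩
  id_comp f := Subtype.ext (Category.id_comp _)
  comp_id f := Subtype.ext (Category.comp_id _)
  assoc f g h := Subtype.ext (Category.assoc _ _ _)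

end Twisted

/-- The mixed category `mC`: objects are quadruples `(X₁, X₂, φ₁, φ₂)` with
`φ₁ ≫ φ₂ = F.app X₁` and `φ₂ ≫ φ₁ = F.app X₂`. -/
structure Mixed (C : Type u) [Category.{v} C] (F : 𝟭 C ⟶ 𝟭 C) where
  X₁ : C
  X₂ : C
  φ₁ : X₁ ⟶ X₂
  φ₂ : X₂ ⟶ X₁
  h₁ : φ₁ ≫ φ₂ = F.app X₁
  h₂ : φ₂ ≫ φ₁ = F.app X₂

namespace Mixed

variable {F : 𝟭 C ⟶ 𝟭 C}

instance : Category (Mixed C F) where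
  Hom A B := { p : (A.X₁ ⟶ B.X₁) × (A.X₂ ⟶ B.X₂) //
      A.φ₁ ≫ p.2 = p.1 ≫ B.φ₁ ∧ A.φ₂ ≫ p.1 = p.2 ≫ B.φ₂ }
  id A := ⟨(𝟙 _, 𝟙 _), by simp⟩
  comp {A B D} f g := ⟨(f.1.1 ≫ g.1.1, f.1.2 ≫ g.1.2), by
    constructor
    · rw [← Category.assoc, f.2.1, Category.assoc, g.2.1, ← Category.assoc]
    · rw [← Category.assoc, f.2.2, Category.assoc, g.2.2, ← Category.assoc]⟩
  id_comp f := Subtype.ext (Prod.ext_iff.mpr ⟨Category.id_comp _, Category.id_comp _⟩)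
  comp_id f := Subtype.ext (Prod.ext_iff.mpr ⟨Category.comp_id _, Category.comp_id _⟩)
  assoc f g h := Subtype.ext (Prod.ext_iff.mpr ⟨Category.assoc _ _ _, Category.assoc _ _ _⟩)

end Mixed

/-- The first component functor `comp₁ : mC ⥤ C`. -/
def comp₁ (F : 𝟭 C ⟶ 𝟭 C) : Mixed C F ⥤ C where
  obj A := A.X₁
  map f := f.1.1
  map_id _ := rfl
  map_comp _ _ := rfl

/-- The second component functor `comp₂ : mC ⥤ C`. -/
def comp₂ (F : 𝟭 C ⟶ 𝟭 C) : Mixed C F ⥤ C where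
  obj A := A.X₂
  map f := f.1.2
  map_id _ := rfl
  map_comp _ _ := rfl

/-- The mixing functor `m : C ⥤ mC`, `X ↦ (X, X, F_X, id_X)`. -/
def mixM (F : 𝟭 C ⟶ 𝟭 C) : C ⥤ Mixed C F where
  obj X := ⟨X, X, F.app X, 𝟙 X, by simp, by simp⟩
  map {X Y} f := ⟨(f, f), by
    constructor
    · simpa using (F.naturality f).symm
    · simp⟩
  map_id _ := rfl
  map_comp _ _ := rfl

/-- The anti-mixing functor `m̄ : C ⥤ mC`, `X ↦ (X, X, id_X, F_X)`. -/
def mixMbar (F : 𝟭 C ⟶ 𝟭 C) : C ⥤ Mixed C F where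
  obj X := ⟨X, X, 𝟙 X, F.app X, by simp, by simp⟩
  map {X Y} f := ⟨(f, f), by
    constructor
    · simp
    · simpa using (F.naturality f).symm⟩
  map_id _ := rfl
  map_comp _ _ := rfl

/-- The twisting functor `τ* : mC ⥤ mC`, swapping the two halves of a mixed object. -/
def tau (F : 𝟭 C ⟶ 𝟭 C) : Mixed C F ⥤ Mixed C F where
  obj A := ⟨A.X₂, A.X₁, A.φ₂, A.φ₁, A.h₂, A.h₁⟩
  map f := ⟨(f.1.2, f.1.1), ⟨f.2.2, f.2.1⟩⟩
  map_id _ := rfl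
  map_comp _ _ := rfl

/-- The twixing functor `δ* : tC ⥤ mC`, `(X, Φ) ↦ (X, X, Φ, Φ)`. -/
def deltaStar (F : 𝟭 C ⟶ 𝟭 C) : Twisted C F ⥤ Mixed C F where
  obj A := ⟨A.X, A.X, A.tw, A.tw, A.tw_tw, A.tw_tw⟩
  map f := ⟨(f.1, f.1), ⟨f.2, f.2⟩⟩
  map_id _ := rfl
  map_comp _ _ := rfl

variable (F : 𝟭 C ⟶ 𝟭 C) [HasPullbacks C] (S : C)

/-- A relative `S`-factorization `X ⟶ X̄ ⟶ △X` of the relative `F` of `X` over `S`. -/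
structure RelFact where
  X : C
  Xb : C
  qX : X ⟶ S
  qXb : Xb ⟶ S
  π : X ⟶ Xb
  π' : Xb ⟶ pullback qX (F.app S)
  hπ : π ≫ qXb = qX
  hπ' : π' ≫ pullback.snd qX (F.app S) = qXb
  fac₁ : π ≫ π' = pullback.lift (F.app X) qX (by simpa using (F.naturality qX).symm)
  fac₂ : π' ≫ pullback.map qX (F.app S) qXb (F.app S) π (𝟙 S) (𝟙 S)
      (by simp [hπ]) (by simp)
    = pullback.lift (F.app Xb) qXb (by simpa using (F.naturality qXb).symm)

/-- The mixed object `(X̄, X, p₁ ∘ π', π)` attached to a relative `S`-factorization. -/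
noncomputable def RelFact.toMixed (r : RelFact F S) : Mixed C F where
  X₁ := r.Xb
  X₂ := r.X
  φ₁ := r.π' ≫ pullback.fst r.qX (F.app S)
  φ₂ := r.π
  h₁ := by
    have h := congrArg (fun t => t ≫ pullback.fst r.qXb (F.app S)) r.fac₂
    simp only [Category.assoc, pullback.lift_fst] at h
    rw [← Category.assoc] at h
    exact h
  h₂ := by
    rw [← Category.assoc, r.fac₁, pullback.lift_fst]

/-- The corresponding mixed object over the visible base `m(S)`. -/
noncomputable def RelFact.toOver (r : RelFact F S) : Over ((mixM F).obj S) :=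
  Over.mk
    (⟨(r.qXb, r.qX), by
      constructor
      · show (r.π' ≫ pullback.fst r.qX (F.app S)) ≫ r.qX = r.qXb ≫ F.app S
        rw [Category.assoc, pullback.condition, ← Category.assoc, r.hπ']
      · show r.π ≫ r.qXb = r.qX ≫ 𝟙 S
        rw [r.hπ, Category.comp_id]⟩ :
      r.toMixed ⟶ (mixM F).obj S)


abbrev ofOverQX (Y : Over ((mixM F).obj S)) : Y.left.X₂ ⟶ S := Y.hom.1.2

abbrev ofOverQXb (Y : Over ((mixM F).obj S)) : Y.left.X₁ ⟶ S := Y.hom.1.1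

theorem ofOverW (Y : Over ((mixM F).obj S)) :
    Y.left.φ₁ ≫ ofOverQX F S Y = ofOverQXb F S Y ≫ F.app S := Y.hom.2.1

/-- Inverse construction: a relative `S`-factorization from a mixed object over `m(S)`. -/
noncomputable def ofOver (Y : Over ((mixM F).obj S)) : RelFact F S where
  X := Y.left.X₂
  Xb := Y.left.X₁
  qX := ofOverQX F S Y
  qXb := ofOverQXb F S Y
  π := Y.left.φ₂
  π' := pullback.lift (W := Y.left.X₁) (X := Y.left.X₂) (Y := S) (Z := S) (f := ofOverQX F S Y)
    (g := F.app S) Y.left.φ₁ (ofOverQXb F S Y)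
    (ofOverW F S Y)
  hπ := by simpa [mixM] using Y.hom.2.2
  hπ' := by simp [pullback.lift_fst, pullback.lift_snd, pullback.lift_fst_assoc, pullback.lift_snd_assoc]
  fac₁ := by
    apply pullback.hom_ext
    · simp [Y.left.h₂, pullback.lift_fst, pullback.lift_snd, pullback.lift_fst_assoc, pullback.lift_snd_assoc]
    · simpa [mixM, pullback.lift_fst, pullback.lift_snd, pullback.lift_fst_assoc, pullback.lift_snd_assoc] using Y.hom.2.2
  fac₂ := by
    apply pullback.hom_ext
    · simp [Y.left.h₁, pullback.lift_fst, pullback.lift_snd, pullback.lift_fst_assoc, pullback.lift_snd_assoc]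
    · simp [pullback.lift_fst, pullback.lift_snd, pullback.lift_fst_assoc, pullback.lift_snd_assoc]

theorem left_inv (r : RelFact F S) : ofOver F S (r.toOver F S) = r := by
  cases r
  unfold ofOver RelFact.toOver RelFact.toMixed
  congr 1
  rename_i _ hπ'' _ _
  apply pullback.hom_ext
  · simp [*, pullback.lift_fst, pullback.lift_snd, pullback.lift_fst_assoc, pullback.lift_snd_assoc]
    rfl
  · simp [*, pullback.lift_fst, pullback.lift_snd, pullback.lift_fst_assoc, pullback.lift_snd_assoc]
    exact hπ''.symm

theorem right_inv (Y : Over ((mixM F).obj S)) : (ofOver F S Y).toOver F S = Y := by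
  obtain ⟨M, ⟨⟨⟩⟩, f⟩ := Y
  obtain ⟨⟨q1, q2⟩, h1, h2⟩ := f
  cases M
  rename_i X1 X2 p1 p2 hh1 hh2
  simp only [RelFact.toOver, RelFact.toMixed, ofOver, Over.mk, CostructuredArrow.mk]
  have e : pullback.lift p1 q1 h1 ≫ pullback.fst q2 (F.app S) = p1 := pullback.lift_fst _ _ _
  congr 1
  · congr 1
  · rw [Subtype.heq_iff_coe_eq]
    intro x
    simp [pullback.lift_fst, pullback.lift_snd, pullback.lift_fst_assoc, pullback.lift_snd_assoc]

theorem test : Function.Bijective (RelFact.toOver F S) :=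
  Function.bijective_iff_has_inverse.mpr
    ⟨ofOver F S, left_inv F S, right_inv F S⟩

/-- Relative `S`-factorizations correspond bijectively to mixed objects over
the visible base `m(S)`, via `(X →^π X̄ →^{π'} △X) ↦ ((X̄, X, p₁ ∘ π', π) → m(S))`. -/
theorem relFact_equiv_mixedOver : Function.Bijective (RelFact.toOver F S) := by
  exact test F S
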